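/- Let h ∈ ℂ ∖ {0,1}, a = −ih, b = −i(h−1), and let λ₂, λ₅ ∈ ℂ. Define the rational functions F₂(z) = (h/2)(−1/z + 1/(z−a) + 1/(z−b)) and F₅(z) = 1/2 − i(h−1)(1/z − 1/(z−a) + 1/(z−b)) − (h(h−1)/2)(1/z² + 1/(z−a)²) − ((h−1)²/2)·1/(z−b)². Then for every radius r > 0 with r < min(|a|, |a−b|), the counterclockwise contour integral over the circle |z − a| = r satisfies (1/(2πi))·∮ (λ₂F₂(z) + λ₅F₅(z)) dz = hλ₂/2 + i(h−1)λ₅; and for every r > 0 with r < min(|b|, |a−b|), the integral over the circle |z − b| = r satisfies (1/(2πi))·∮ (λ₂F₂(z) + λ₅F₅(z)) dz = hλ₂/2 − i(h−1)λ₅. -/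

import Mathlib

set_option maxHeartbeats 1000000

open Complex Metric

lemma aux_integral_add {f g : ℂ → ℂ} {c : ℂ} {R : ℝ} (hf : CircleIntegrable f c R)
    (hg : CircleIntegrable g c R) :
    (∮ z in C(c, R), f z + g z) = (∮ z in C(c, R), f z) + ∮ z in C(c, R), g z := by
  simp only [circleIntegral, smul_add, intervalIntegral.integral_add hf.out hg.out]

lemma aux_inv_zero {c q : ℂ} {r : ℝ} (hr : 0 ≤ r) (hq : q ∉ closedBall c r) :
    (∮ z in C(c, r), (z - q)⁻¹) = 0 := by
  refine Complex.circleIntegral_eq_zero_of_differentiable_on_off_countable hr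
    Set.countable_empty ?_ ?_
  · intro z hz
    exact ((continuousOn_id.sub continuousOn_const).inv₀
      fun z hz => sub_ne_zero.2 (ne_of_mem_of_not_mem hz hq)) z hz
  · intro z hz
    exact (differentiableAt_id.sub_const q).inv
      (sub_ne_zero.2 (ne_of_mem_of_not_mem (ball_subset_closedBall hz.1) hq))

lemma aux_inv_sq {c q : ℂ} {r : ℝ} :
    (∮ z in C(c, r), ((z - q) ^ 2)⁻¹) = 0 := by
  have h := circleIntegral.integral_sub_zpow_of_ne (n := -2) (by decide) c q r
  have : (fun z : ℂ => ((z - q) ^ 2)⁻¹) = fun z => (z - q) ^ (-2 : ℤ) := by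
    funext z; rw [zpow_neg]; norm_cast
  rw [this]; exact h

lemma aux_integrable_inv {c q : ℂ} {r : ℝ} (hr : 0 ≤ r) (hq : q ∉ sphere c r) :
    CircleIntegrable (fun z => (z - q)⁻¹) c r :=
  ContinuousOn.circleIntegrable hr <|
    (continuousOn_id.sub continuousOn_const).inv₀
      fun z hz => sub_ne_zero.2 (ne_of_mem_of_not_mem hz hq)

lemma aux_integrable_inv_sq {c q : ℂ} {r : ℝ} (hr : 0 ≤ r) (hq : q ∉ sphere c r) :
    CircleIntegrable (fun z => ((z - q) ^ 2)⁻¹) c r :=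
  ContinuousOn.circleIntegrable hr <|
    (((continuousOn_id.sub continuousOn_const).pow 2).inv₀
      fun z hz => pow_ne_zero _ (sub_ne_zero.2 (ne_of_mem_of_not_mem hz hq)))

lemma aux_key (x y : ℂ) (cz cx cy dz dx dy e : ℂ) (c : ℂ) (r : ℝ) (hr : 0 < r)
    (hx : x ∈ ball c r) (h0 : (0 : ℂ) ∉ closedBall c r) (hy : y ∉ closedBall c r) :
    (∮ z in C(c, r), (cz * (z - 0)⁻¹ + cx * (z - x)⁻¹ + cy * (z - y)⁻¹
      + dz * ((z - 0) ^ 2)⁻¹ + dx * ((z - x) ^ 2)⁻¹ + dy * ((z - y) ^ 2)⁻¹ + e))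
      = cx * (2 * Real.pi * I) := by
  have h0' : (0 : ℂ) ∉ sphere c r := fun h => h0 (sphere_subset_closedBall h)
  have hy' : y ∉ sphere c r := fun h => hy (sphere_subset_closedBall h)
  have hx' : x ∉ sphere c r := fun h => absurd (mem_sphere.1 h) (ne_of_lt (mem_ball.1 hx))
  have i1 : CircleIntegrable (fun z => cz * (z - 0)⁻¹) c r :=
    (aux_integrable_inv (q := 0) hr.le h0').const_mul cz
  have i2 : CircleIntegrable (fun z => cx * (z - x)⁻¹) c r :=
    (aux_integrable_inv (q := x) hr.le hx').const_mul cx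
  have i3 : CircleIntegrable (fun z => cy * (z - y)⁻¹) c r :=
    (aux_integrable_inv (q := y) hr.le hy').const_mul cy
  have i4 : CircleIntegrable (fun z => dz * ((z - 0) ^ 2)⁻¹) c r :=
    (aux_integrable_inv_sq (q := 0) hr.le h0').const_mul dz
  have i5 : CircleIntegrable (fun z => dx * ((z - x) ^ 2)⁻¹) c r :=
    (aux_integrable_inv_sq (q := x) hr.le hx').const_mul dx
  have i6 : CircleIntegrable (fun z => dy * ((z - y) ^ 2)⁻¹) c r :=
    (aux_integrable_inv_sq (q := y) hr.le hy').const_mul dy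
  have i7 : CircleIntegrable (fun _ : ℂ => e) c r :=
    ContinuousOn.circleIntegrable hr.le continuousOn_const
  have s2 : CircleIntegrable (fun z => cz * (z - 0)⁻¹ + cx * (z - x)⁻¹) c r := i1.add i2
  have s3 : CircleIntegrable (fun z => cz * (z - 0)⁻¹ + cx * (z - x)⁻¹ + cy * (z - y)⁻¹) c r :=
    s2.add i3
  have s4 : CircleIntegrable (fun z => cz * (z - 0)⁻¹ + cx * (z - x)⁻¹ + cy * (z - y)⁻¹
      + dz * ((z - 0) ^ 2)⁻¹) c r := s3.add i4
  have s5 : CircleIntegrable (fun z => cz * (z - 0)⁻¹ + cx * (z - x)⁻¹ + cy * (z - y)⁻¹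
      + dz * ((z - 0) ^ 2)⁻¹ + dx * ((z - x) ^ 2)⁻¹) c r := s4.add i5
  have s6 : CircleIntegrable (fun z => cz * (z - 0)⁻¹ + cx * (z - x)⁻¹ + cy * (z - y)⁻¹
      + dz * ((z - 0) ^ 2)⁻¹ + dx * ((z - x) ^ 2)⁻¹ + dy * ((z - y) ^ 2)⁻¹) c r := s5.add i6
  rw [aux_integral_add s6 i7, aux_integral_add s5 i6, aux_integral_add s4 i5,
    aux_integral_add s3 i4, aux_integral_add s2 i3, aux_integral_add i1 i2]
  simp only [circleIntegral.integral_const_mul]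
  rw [aux_inv_zero hr.le h0, aux_inv_zero hr.le hy,
    circleIntegral.integral_sub_inv_of_mem_ball hx, aux_inv_sq, aux_inv_sq, aux_inv_sq]
  have : (∮ _ in C(c, r), e) = 0 := by
    have h1 := circleIntegral.integral_sub_zpow_of_ne (n := 0) (by decide) c 0 r
    have h2 : (∮ _ in C(c, r), e) = ∮ z in C(c, r), e * (z - 0) ^ (0 : ℤ) := by
      apply circleIntegral.integral_congr hr.le; intro z hz; simp
    rw [h2, circleIntegral.integral_const_mul, h1, mul_zero]
  rw [this]; ring

/-- Residues of the perturbation form `λ₂F₂ + λ₅F₅` at the punctures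
`a = −ih` and `b = −i(h−1)` of the uniformized level curve `Γ_h`: small
counterclockwise circles around `a` and around `b` give
`(2πi)⁻¹ ∮ (λ₂F₂ + λ₅F₅) dz = hλ₂/2 + i(h−1)λ₅` and
`= hλ₂/2 − i(h−1)λ₅` respectively. -/
theorem residues_of_perturbation_form (h : ℂ) (h0 : h ≠ 0) (h1 : h ≠ 1) (l2 l5 : ℂ) :
    let a : ℂ := -I * h
    let b : ℂ := -I * (h - 1)
    let F2 : ℂ → ℂ := fun z => (h / 2) * (-(1 / z) + 1 / (z - a) + 1 / (z - b))
    let F5 : ℂ → ℂ := fun z => 1 / 2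
      - I * (h - 1) * (1 / z - 1 / (z - a) + 1 / (z - b))
      - (h * (h - 1) / 2) * (1 / z ^ 2 + 1 / (z - a) ^ 2)
      - ((h - 1) ^ 2 / 2) * (1 / (z - b) ^ 2)
    (∀ r : ℝ, 0 < r → r < min ‖a‖ ‖a - b‖ →
      (1 / (2 * Real.pi * I)) * (∮ z in C(a, r), (l2 * F2 z + l5 * F5 z))
        = h * l2 / 2 + I * (h - 1) * l5)
    ∧ (∀ r : ℝ, 0 < r → r < min ‖b‖ ‖a - b‖ →
      (1 / (2 * Real.pi * I)) * (∮ z in C(b, r), (l2 * F2 z + l5 * F5 z))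
        = h * l2 / 2 - I * (h - 1) * l5) := by
  intro a b F2 F5
  have hpi : (2 * (Real.pi : ℂ) * I) ≠ 0 := by
    simp [Real.pi_ne_zero, I_ne_zero]
  constructor
  · intro r hr hrlt
    have hlt := lt_min_iff.1 hrlt
    have hx : a ∈ ball a r := mem_ball_self hr
    have h0m : (0 : ℂ) ∉ closedBall a r := by
      simp only [mem_closedBall, Complex.dist_eq, zero_sub, norm_neg, not_le]
      exact hlt.1
    have hym : b ∉ closedBall a r := by
      simp only [mem_closedBall, Complex.dist_eq, not_le]
      rw [norm_sub_rev]
      exact hlt.2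
    have key := aux_key a b (-(l2 * h / 2) - l5 * I * (h - 1)) (l2 * h / 2 + l5 * I * (h - 1))
      (l2 * h / 2 - l5 * I * (h - 1)) (-(l5 * h * (h - 1) / 2)) (-(l5 * h * (h - 1) / 2))
      (-(l5 * (h - 1) ^ 2 / 2)) (l5 / 2) a r hr hx h0m hym
    have congr : (∮ z in C(a, r), (l2 * F2 z + l5 * F5 z))
        = ∮ z in C(a, r), ((-(l2 * h / 2) - l5 * I * (h - 1)) * (z - 0)⁻¹
          + (l2 * h / 2 + l5 * I * (h - 1)) * (z - a)⁻¹
          + (l2 * h / 2 - l5 * I * (h - 1)) * (z - b)⁻¹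
          + (-(l5 * h * (h - 1) / 2)) * ((z - 0) ^ 2)⁻¹
          + (-(l5 * h * (h - 1) / 2)) * ((z - a) ^ 2)⁻¹
          + (-(l5 * (h - 1) ^ 2 / 2)) * ((z - b) ^ 2)⁻¹ + l5 / 2) := by
      refine circleIntegral.integral_congr hr.le fun z _ => ?_
      simp only [F2, F5, one_div, sub_zero]
      ring
    rw [congr, key]
    field_simp
  · intro r hr hrlt
    have hlt := lt_min_iff.1 hrlt
    have hx : b ∈ ball b r := mem_ball_self hr
    have h0m : (0 : ℂ) ∉ closedBall b r := by
      simp only [mem_closedBall, Complex.dist_eq, zero_sub, norm_neg, not_le]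
      exact hlt.1
    have hym : a ∉ closedBall b r := by
      simp only [mem_closedBall, Complex.dist_eq, not_le]
      exact hlt.2
    have key := aux_key b a (-(l2 * h / 2) - l5 * I * (h - 1)) (l2 * h / 2 - l5 * I * (h - 1))
      (l2 * h / 2 + l5 * I * (h - 1)) (-(l5 * h * (h - 1) / 2)) (-(l5 * (h - 1) ^ 2 / 2))
      (-(l5 * h * (h - 1) / 2)) (l5 / 2) b r hr hx h0m hym
    have congr : (∮ z in C(b, r), (l2 * F2 z + l5 * F5 z))
        = ∮ z in C(b, r), ((-(l2 * h / 2) - l5 * I * (h - 1)) * (z - 0)⁻¹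
          + (l2 * h / 2 - l5 * I * (h - 1)) * (z - b)⁻¹
          + (l2 * h / 2 + l5 * I * (h - 1)) * (z - a)⁻¹
          + (-(l5 * h * (h - 1) / 2)) * ((z - 0) ^ 2)⁻¹
          + (-(l5 * (h - 1) ^ 2 / 2)) * ((z - b) ^ 2)⁻¹
          + (-(l5 * h * (h - 1) / 2)) * ((z - a) ^ 2)⁻¹ + l5 / 2) := by
      refine circleIntegral.integral_congr hr.le fun z _ => ?_
      simp only [F2, F5, one_div, sub_zero]
      ring
    rw [congr, key]
    field_simp
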